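/- Proposition 2.5, second inequality: Fix an integer m ≥ 1. There exists a constant C, depending only on m, such that for every ℤ³-periodic smooth divergence-free mean-zero field ξ, every ℤ³-periodic smooth divergence-free mean-zero field f, and every field g with g = 𝒫(𝓛_ξ f), one has ⟨g, f⟩_{W^{m,2}}² ≤ C ‖ξ‖_{W^{m,∞}}² ‖f‖_{W^{m,2}}⁴. -/

import Mathlib

open MeasureTheory

noncomputable section

/-- Points of ℝ³ (as `Fin 3 → ℝ`). -/
abbrev V3 := Fin 3 → ℝ
/-- Vector fields on ℝ³. -/
abbrev VF := V3 → V3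

/-- Smoothness of a vector field. -/
def SmoothVF (f : VF) : Prop := ContDiff ℝ (⊤ : ℕ∞) f

/-- Smoothness of a scalar function. -/
def SmoothS (p : V3 → ℝ) : Prop := ContDiff ℝ (⊤ : ℕ∞) p

/-- The periodicity cell [0,1)³. -/
def cube : Set V3 := Set.univ.pi fun _ => Set.Ico (0:ℝ) 1

/-- Partial derivative in the j-th coordinate, acting componentwise. -/
def pd (j : Fin 3) (f : VF) : VF := fun x => fderiv ℝ f x (Pi.single j 1)

/-- Iterated derivative D^α = ∂₁^{α₁}∂₂^{α₂}∂₃^{α₃} for a multi-index α = (α₁, α₂, α₃). -/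
def Dm (α : ℕ × ℕ × ℕ) (f : VF) : VF :=
  (pd 0)^[α.1] ((pd 1)^[α.2.1] ((pd 2)^[α.2.2] f))

/-- The order |α| of a multi-index. -/
def mdeg (α : ℕ × ℕ × ℕ) : ℕ := α.1 + α.2.1 + α.2.2

/-- ℤ³-periodicity of a vector field. -/
def Periodic3 (f : VF) : Prop :=
  ∀ (x : V3) (k : Fin 3 → ℤ), f (x + fun i => (k i : ℝ)) = f x

/-- ℤ³-periodicity of a scalar function. -/
def PeriodicS (p : V3 → ℝ) : Prop :=
  ∀ (x : V3) (k : Fin 3 → ℤ), p (x + fun i => (k i : ℝ)) = p x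

/-- Divergence-free: Σ_j ∂_j f^j ≡ 0. -/
def DivFree (f : VF) : Prop := ∀ x, ∑ j, pd j f x j = 0

/-- Mean-zero over the periodicity cell. -/
def MeanZero (f : VF) : Prop := (∫ x in cube, f x) = 0

/-- The L² inner product over the periodicity cell. -/
def L2inner (f g : VF) : ℝ := ∫ x in cube, ∑ i, f x i * g x i

/-- The finite set of multi-indices of order at most m. -/
def midx (m : ℕ) : Finset (ℕ × ℕ × ℕ) :=
  (Finset.range (m+1) ×ˢ Finset.range (m+1) ×ˢ Finset.range (m+1)).filter
    fun α => mdeg α ≤ m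

lemma midx_nonempty (m : ℕ) : (midx m).Nonempty :=
  ⟨(0,0,0), by
    unfold midx
    exact Finset.mem_filter.mpr ⟨by simp [Finset.mem_product], by simp [mdeg]⟩⟩

/-- The W^{m,2} inner product ⟨f,g⟩_{W^{m,2}} = Σ_{|α|≤m} ⟨D^α f, D^α g⟩_{L²}. -/
def sobInner (m : ℕ) (f g : VF) : ℝ := ∑ α ∈ midx m, L2inner (Dm α f) (Dm α g)

/-- The squared W^{m,2} norm. -/
def sobNormSq (m : ℕ) (f : VF) : ℝ := sobInner m f f

/-- The W^{k,∞} norm: max over |α| ≤ k of sup_x |D^α ξ(x)|. -/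
def WinfNorm (k : ℕ) (ξ : VF) : ℝ :=
  (midx k).sup' (midx_nonempty k) fun α => ⨆ x, ‖Dm α ξ x‖

/-- The transport operator 𝓛_ξ f = Σ_j ξ^j ∂_j f. -/
def transport (ξ f : VF) : VF := fun x => ∑ j, ξ x j • pd j f x

/-- The stretching operator 𝓣_ξ f, with l-th component Σ_j f^j ∂_l ξ^j. -/
def stretch (ξ f : VF) : VF := fun x l => ∑ j, f x j * pd l ξ x j

/-- The L²-adjoint 𝓣*_ξ g, with j-th component Σ_l g^l ∂_l ξ^j. -/
def stretchStar (ξ g : VF) : VF := fun x j => ∑ l, g x l * pd l ξ x j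

/-- The transport–stretching operator B_ξ = 𝓛_ξ + 𝓣_ξ. -/
def Bop (ξ f : VF) : VF := fun x => transport ξ f x + stretch ξ f x

/-- The gradient of a scalar function. -/
def grad (p : V3 → ℝ) : VF := fun x i => fderiv ℝ p x (Pi.single i 1)

/-- `IsLeray u g` : g is the Leray projection 𝒫u of u, i.e. g is a ℤ³-periodic smooth
divergence-free mean-zero field and u − g = ∇p + c for some ℤ³-periodic smooth scalar p
and constant vector c. -/
def IsLeray (u g : VF) : Prop :=
  Periodic3 g ∧ SmoothVF g ∧ DivFree g ∧ MeanZero g ∧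
  ∃ (p : V3 → ℝ) (c : V3), PeriodicS p ∧ SmoothS p ∧
    ∀ x, u x - g x = grad p x + c

/-- The componentwise Laplacian. -/
def lap (f : VF) : VF := fun x => ∑ j, pd j (pd j f) x

/-- The Stokes inner product ⟨u,v⟩_{A^{m/2}}. -/
def stokesInner (m : ℕ) (u v : VF) : ℝ :=
  if m % 2 = 0 then L2inner (lap^[m/2] u) (lap^[m/2] v)
  else ∑ j : Fin 3, L2inner (pd j (lap^[m/2] u)) (pd j (lap^[m/2] v))

/-- A ℤ³-periodic smooth divergence-free mean-zero vector field. -/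
def GoodField (f : VF) : Prop :=
  Periodic3 f ∧ SmoothVF f ∧ DivFree f ∧ MeanZero f

-- === Infrastructure ===
section Infra

/-- scalar partial derivative -/
def pdS (j : Fin 3) (q : V3 → ℝ) : V3 → ℝ := fun x => fderiv ℝ q x (Pi.single j 1)

lemma SmoothVF.diffAt {F : VF} (hF : SmoothVF F) {x : V3} : DifferentiableAt ℝ F x :=
  (hF.differentiable (by simp)) x

lemma SmoothS.diffAt {q : V3 → ℝ} (hq : SmoothS q) {x : V3} : DifferentiableAt ℝ q x :=
  (hq.differentiable (by simp)) x

lemma smooth_pd {F : VF} (hF : SmoothVF F) (j : Fin 3) : SmoothVF (pd j F) :=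
  (hF.fderiv_right (le_refl _)).clm_apply contDiff_const

lemma smoothS_pdS {q : V3 → ℝ} (hq : SmoothS q) (j : Fin 3) : SmoothS (pdS j q) :=
  (hq.fderiv_right (le_refl _)).clm_apply contDiff_const

lemma smooth_comp_apply {F : VF} (hF : SmoothVF F) (i : Fin 3) :
    SmoothS (fun y => F y i) := by
  exact contDiff_pi.mp hF i

lemma pd_apply {F : VF} (hF : SmoothVF F) (j i : Fin 3) (x : V3) :
    pd j F x i = pdS j (fun y => F y i) x := by
  have h1 : HasFDerivAt F (fderiv ℝ F x) x := hF.diffAt.hasFDerivAt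
  have h2 : HasFDerivAt (fun y => F y i)
      ((ContinuousLinearMap.proj (R := ℝ) (φ := fun _ : Fin 3 => ℝ) i).comp (fderiv ℝ F x)) x :=
    ((ContinuousLinearMap.proj (R := ℝ) (φ := fun _ : Fin 3 => ℝ) i).hasFDerivAt).comp x h1
  simp only [pdS, h2.fderiv]
  rfl

lemma pd_add {F G : VF} (hF : SmoothVF F) (hG : SmoothVF G) (j : Fin 3) :
    pd j (fun x => F x + G x) = fun x => pd j F x + pd j G x := by
  funext x
  simp only [pd, fderiv_fun_add hF.diffAt hG.diffAt, ContinuousLinearMap.add_apply]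

lemma pd_const (c : V3) (j : Fin 3) : pd j (fun _ => c) = fun _ => (0 : V3) := by
  funext x
  simp [pd]

lemma pd_smul {c : V3 → ℝ} {F : VF} (hc : SmoothS c) (hF : SmoothVF F) (j : Fin 3) :
    pd j (fun x => c x • F x) = fun x => c x • pd j F x + pdS j c x • F x := by
  funext x
  simp only [pd, pdS, fderiv_fun_smul hc.diffAt hF.diffAt]
  simp [ContinuousLinearMap.smul_apply, ContinuousLinearMap.smulRight_apply]

end Infra
section Infra2

lemma pd_comm {F : VF} (hF : SmoothVF F) (i j : Fin 3) :
    pd i (pd j F) = pd j (pd i F) := by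
  funext x
  have hsym : IsSymmSndFDerivAt ℝ F x :=
    hF.contDiffAt.isSymmSndFDerivAt (by simp only [minSmoothness_of_isRCLikeNormedField]; exact WithTop.coe_le_coe.mpr le_top)
  have hC : ContDiff ℝ (⊤:ℕ∞) (fderiv ℝ F) := hF.fderiv_right (le_refl _)
  have hd : DifferentiableAt ℝ (fderiv ℝ F) x :=
    (hC.differentiable (by simp)) x
  have e1 : ∀ a b : V3, fderiv ℝ (fun y => fderiv ℝ F y b) x a = fderiv ℝ (fderiv ℝ F) x a b := by
    intro a b
    rw [fderiv_clm_apply hd (differentiableAt_const b)]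
    simp
  show fderiv ℝ (fun y => fderiv ℝ F y (Pi.single j 1)) x (Pi.single i 1) =
    fderiv ℝ (fun y => fderiv ℝ F y (Pi.single i 1)) x (Pi.single j 1)
  rw [e1, e1, hsym.eq]

lemma smooth_pd_iter {F : VF} (hF : SmoothVF F) (j : Fin 3) (n : ℕ) :
    SmoothVF ((pd j)^[n] F) := by
  induction n with
  | zero => exact hF
  | succ n ih => rw [Function.iterate_succ_apply']; exact smooth_pd ih j

lemma pd_comm_iter {F : VF} (hF : SmoothVF F) (i j : Fin 3) (n : ℕ) :
    pd i ((pd j)^[n] F) = (pd j)^[n] (pd i F) := by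
  induction n with
  | zero => rfl
  | succ n ih =>
    rw [Function.iterate_succ_apply', Function.iterate_succ_apply',
      pd_comm (smooth_pd_iter hF j n) i j, ih]

lemma smooth_Dm {F : VF} (hF : SmoothVF F) (α : ℕ × ℕ × ℕ) : SmoothVF (Dm α F) :=
  smooth_pd_iter (smooth_pd_iter (smooth_pd_iter hF 2 α.2.2) 1 α.2.1) 0 α.1

/-- bump a multi-index in direction k -/
def bump (k : Fin 3) (α : ℕ × ℕ × ℕ) : ℕ × ℕ × ℕ :=
  if k = 0 then (α.1 + 1, α.2.1, α.2.2)
  else if k = 1 then (α.1, α.2.1 + 1, α.2.2) else (α.1, α.2.1, α.2.2 + 1)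

lemma mdeg_bump (k : Fin 3) (α : ℕ × ℕ × ℕ) : mdeg (bump k α) = mdeg α + 1 := by
  fin_cases k <;> simp [bump, mdeg] <;> omega

lemma pd_Dm {F : VF} (hF : SmoothVF F) (k : Fin 3) (α : ℕ × ℕ × ℕ) :
    pd k (Dm α F) = Dm (bump k α) F := by
  obtain ⟨a, b, c⟩ := α
  fin_cases k
  · show pd 0 (Dm (a,b,c) F) = Dm (a+1,b,c) F
    simp only [Dm, Function.iterate_succ_apply']
  · show pd 1 (Dm (a,b,c) F) = Dm (a,b+1,c) F
    simp only [Dm]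
    rw [pd_comm_iter (smooth_pd_iter (smooth_pd_iter hF 2 c) 1 b) 1 0 a,
      ← Function.iterate_succ_apply' (pd 1)]
  · show pd 2 (Dm (a,b,c) F) = Dm (a,b,c+1) F
    simp only [Dm]
    rw [pd_comm_iter (smooth_pd_iter (smooth_pd_iter hF 2 c) 1 b) 2 0 a,
      pd_comm_iter (smooth_pd_iter hF 2 c) 2 1 b,
      ← Function.iterate_succ_apply' (pd 2)]

lemma periodic_pd {F : VF} (hFs : SmoothVF F) (hF : Periodic3 F) (j : Fin 3) :
    Periodic3 (pd j F) := by
  intro x k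
  set c : V3 := (fun i => (k i : ℝ)) with hc
  have h : (fun y : V3 => F (y + c)) = F := funext fun y => hF y k
  have h1 : HasFDerivAt (fun y : V3 => y + c) (ContinuousLinearMap.id ℝ V3) x := by
    simpa using (hasFDerivAt_id (𝕜 := ℝ) x).add_const c
  have h2 : HasFDerivAt (fun y : V3 => F (y + c))
      ((fderiv ℝ F (x + c)).comp (ContinuousLinearMap.id ℝ V3)) x :=
    (hFs.diffAt.hasFDerivAt).comp x h1
  rw [h] at h2
  show fderiv ℝ F (x + c) _ = fderiv ℝ F x _
  rw [h2.fderiv]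
  rfl

lemma periodic_Dm {F : VF} (hFs : SmoothVF F) (hF : Periodic3 F) (α : ℕ × ℕ × ℕ) :
    Periodic3 (Dm α F) := by
  obtain ⟨a, b, c⟩ := α
  unfold Dm
  have step : ∀ (j : Fin 3) (n : ℕ) (G : VF), SmoothVF G → Periodic3 G →
      Periodic3 ((pd j)^[n] G) := by
    intro j n
    induction n with
    | zero => intro G _ hG; exact hG
    | succ n ih =>
      intro G hGs hG
      rw [Function.iterate_succ_apply']
      exact periodic_pd (smooth_pd_iter hGs j n) (ih G hGs hG) j
  exact step 0 a _ (smooth_pd_iter (smooth_pd_iter hFs 2 c) 1 b)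
    (step 1 b _ (smooth_pd_iter hFs 2 c) (step 2 c F hFs hF))

end Infra2
section Integration

open Set

/-- closed cube -/
def cubeC : Set V3 := Set.univ.pi fun _ => Set.Icc (0:ℝ) 1

lemma cube_subset_cubeC : cube ⊆ cubeC :=
  Set.pi_mono fun _ _ => Set.Ico_subset_Icc_self

lemma isCompact_cubeC : IsCompact cubeC :=
  isCompact_univ_pi fun _ => isCompact_Icc

lemma integrableOn_cube {E : Type*} [NormedAddCommGroup E] {q : V3 → E} (hq : Continuous q) :
    IntegrableOn q cube volume := by
  have h : IntegrableOn q cubeC volume :=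
    hq.continuousOn.integrableOn_compact isCompact_cubeC
  exact h.mono_set cube_subset_cubeC

lemma exists_cube_rep (x : V3) : ∃ y ∈ cube, ∃ k : Fin 3 → ℤ,
    x = y + fun i => (k i : ℝ) := by
  refine ⟨fun i => Int.fract (x i), ?_, fun i => ⌊x i⌋, ?_⟩
  · intro i _
    exact ⟨Int.fract_nonneg _, Int.fract_lt_one _⟩
  · funext i
    simp only [Pi.add_apply]
    exact (Int.fract_add_floor (x i)).symm

lemma periodic_norm_bdd {G : VF} (hGc : Continuous G) (hG : Periodic3 G) :
    BddAbove (Set.range fun x => ‖G x‖) := by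
  obtain ⟨C, hC⟩ := isCompact_cubeC.exists_bound_of_continuousOn hGc.continuousOn
  refine ⟨C, ?_⟩
  rintro r ⟨x, rfl⟩
  obtain ⟨y, hy, k, rfl⟩ := exists_cube_rep x
  show ‖G (y + fun i => (k i : ℝ))‖ ≤ C
  rw [hG y k]
  exact hC y (cube_subset_cubeC hy)

lemma winf_bound {ξ : VF} (hs : SmoothVF ξ) (hp : Periodic3 ξ) {m : ℕ}
    {α : ℕ × ℕ × ℕ} (hα : α ∈ midx m) (x : V3) :
    ‖Dm α ξ x‖ ≤ WinfNorm m ξ := by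
  have bdd : BddAbove (Set.range fun y => ‖Dm α ξ y‖) :=
    periodic_norm_bdd (smooth_Dm hs α).continuous (periodic_Dm hs hp α)
  calc ‖Dm α ξ x‖ ≤ ⨆ y, ‖Dm α ξ y‖ := le_ciSup bdd x
  _ ≤ WinfNorm m ξ := Finset.le_sup' (f := fun α => ⨆ y, ‖Dm α ξ y‖) hα

lemma winf_nonneg {ξ : VF} (m : ℕ) : 0 ≤ WinfNorm m ξ := by
  refine le_trans ?_ (Finset.le_sup' (f := fun α => ⨆ y, ‖Dm α ξ y‖) (midx_nonempty m).choose_spec)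
  exact Real.iSup_nonneg fun y => norm_nonneg _

/-- The key integration-by-parts lemma: the integral over the cube of a partial
derivative of a smooth periodic scalar function vanishes. -/
lemma integral_pdS_eq_zero {W : V3 → ℝ} (hW : SmoothS W) (hWp : PeriodicS W) (j : Fin 3) :
    (∫ x in cube, pdS j W x) = 0 := by
  classical
  set e := MeasurableEquiv.piFinSuccAbove (fun _ : Fin 3 => ℝ) j with he
  have MP : MeasurePreserving e volume volume :=
    volume_preserving_piFinSuccAbove (fun _ : Fin 3 => ℝ) j
  have hsymm_same : ∀ z : ℝ × (Fin 2 → ℝ), (e.symm z) j = z.1 := by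
    intro z
    simp [he, MeasurableEquiv.piFinSuccAbove_symm_apply]
  have hsymm_above : ∀ (z : ℝ × (Fin 2 → ℝ)) (i : Fin 2), (e.symm z) (j.succAbove i) = z.2 i := by
    intro z i
    simp [he, MeasurableEquiv.piFinSuccAbove_symm_apply]
  set cube2 : Set (Fin 2 → ℝ) := Set.univ.pi fun _ => Set.Ico (0:ℝ) 1 with hcube2
  have himg : e '' cube = (Set.Ico (0:ℝ) 1) ×ˢ cube2 := by
    ext z
    constructor
    · rintro ⟨x, hx, rfl⟩
      have h1 : (e x).1 = x j := rfl
      have h2 : ∀ i : Fin 2, (e x).2 i = x (j.succAbove i) := fun i => rfl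
      refine ⟨by rw [h1]; exact hx j (Set.mem_univ _),
        fun i _ => by rw [h2]; exact hx (j.succAbove i) (Set.mem_univ _)⟩
    · rintro ⟨h1, h2⟩
      refine ⟨e.symm z, ?_, e.apply_symm_apply z⟩
      intro l _
      rcases eq_or_ne l j with rfl | hne
      · rw [hsymm_same]; exact h1
      · obtain ⟨i, rfl⟩ := Fin.exists_succAbove_eq hne
        rw [hsymm_above]; exact h2 i (Set.mem_univ _)
  set g : ℝ × (Fin 2 → ℝ) → ℝ := fun z => pdS j W (e.symm z) with hg
  have hge : ∀ x : V3, g (e x) = pdS j W x := by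
    intro x
    rw [hg]
    simp only [e.symm_apply_apply]
  have hstep1 : (∫ x in cube, pdS j W x) = ∫ z in (Set.Ico (0:ℝ) 1) ×ˢ cube2, g z := by
    rw [← himg]
    rw [MP.setIntegral_image_emb e.measurableEmbedding g cube]
    simp_rw [hge]
  -- continuity of e.symm and g
  have hins : Continuous (fun z : ℝ × (Fin 2 → ℝ) => e.symm z) := by
    apply continuous_pi
    intro l
    rcases eq_or_ne l j with rfl | hne
    · simp only [hsymm_same]; exact continuous_fst
    · obtain ⟨i, rfl⟩ := Fin.exists_succAbove_eq hne
      simp only [hsymm_above]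
      exact (continuous_apply i).comp continuous_snd
  have hpdc : Continuous (pdS j W) := (smoothS_pdS hW j).continuous
  have hgc : Continuous g := hpdc.comp hins
  -- integrability of g on the product set
  have hgint : Integrable g (((volume : Measure ℝ).restrict (Set.Ico (0:ℝ) 1)).prod
      ((volume : Measure (Fin 2 → ℝ)).restrict cube2)) := by
    rw [Measure.prod_restrict]
    have hcomp : IsCompact ((Set.Icc (0:ℝ) 1) ×ˢ (Set.univ.pi fun _ : Fin 2 => Set.Icc (0:ℝ) 1)) :=
      isCompact_Icc.prod (isCompact_univ_pi fun _ => isCompact_Icc)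
    have h1 : IntegrableOn g ((Set.Icc (0:ℝ) 1) ×ˢ (Set.univ.pi fun _ : Fin 2 => Set.Icc (0:ℝ) 1)) :=
      hgc.continuousOn.integrableOn_compact hcomp
    exact h1.mono_set (Set.prod_mono Set.Ico_subset_Icc_self
      (Set.pi_mono fun _ _ => Set.Ico_subset_Icc_self))
  have hstep2 : (∫ z in (Set.Ico (0:ℝ) 1) ×ˢ cube2, g z)
      = ∫ y in cube2, (∫ t in Set.Ico (0:ℝ) 1, g (t, y)) := by
    rw [Measure.volume_eq_prod, ← Measure.prod_restrict]
    exact integral_prod_symm g hgint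
  -- inner integral vanishes by FTC and periodicity
  have hinner : ∀ y : Fin 2 → ℝ, (∫ t in Set.Ico (0:ℝ) 1, g (t, y)) = 0 := by
    intro y
    set v : V3 := Pi.single j 1 with hv
    set b : V3 := e.symm (0, y) with hb
    have haff : ∀ t : ℝ, e.symm (t, y) = b + t • v := by
      intro t
      funext l
      rcases eq_or_ne l j with rfl | hne
      · simp only [Pi.add_apply, Pi.smul_apply, hb, hsymm_same, hv, Pi.single_eq_same,
          smul_eq_mul, mul_one]
        ring
      · obtain ⟨i, rfl⟩ := Fin.exists_succAbove_eq hne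
        have hne2 : j.succAbove i ≠ j := Fin.succAbove_ne j i
        simp only [Pi.add_apply, Pi.smul_apply, hb, hv, smul_eq_mul]
        rw [hsymm_above, hsymm_above, Pi.single_apply, if_neg hne2]
        ring
    set φ : ℝ → ℝ := fun t => W (b + t • v) with hφ
    have hderiv : ∀ t : ℝ, HasDerivAt φ (pdS j W (b + t • v)) t := by
      intro t
      have h1 : HasDerivAt (fun t : ℝ => b + t • v) v t := by
        simpa using ((hasDerivAt_id t).smul_const v).const_add b
      have h2 := (hW.diffAt.hasFDerivAt (x := b + t • v)).comp_hasDerivAt t h1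
      exact h2
    have hφcont : Continuous fun t : ℝ => pdS j W (b + t • v) := by
      exact hpdc.comp (continuous_const.add (continuous_id.smul continuous_const))
    have key : (∫ t in Set.Ico (0:ℝ) 1, pdS j W (b + t • v)) = φ 1 - φ 0 := by
      rw [MeasureTheory.setIntegral_congr_set Ico_ae_eq_Ioc,
        ← intervalIntegral.integral_of_le (zero_le_one)]
      exact intervalIntegral.integral_eq_sub_of_hasDerivAt
        (fun t _ => hderiv t) (hφcont.intervalIntegrable 0 1)
    have hper : φ 1 = φ 0 := by
      have hk : (fun i => ((Pi.single j 1 : Fin 3 → ℤ) i : ℝ)) = v := by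
        funext i
        by_cases h : i = j <;> simp [hv, Pi.single_apply, h]
      have hWb := hWp b (Pi.single j 1)
      rw [hk] at hWb
      simp only [hφ, one_smul, zero_smul, add_zero]
      exact hWb
    have heq : (∫ t in Set.Ico (0:ℝ) 1, g (t, y))
        = ∫ t in Set.Ico (0:ℝ) 1, pdS j W (b + t • v) := by
      apply MeasureTheory.setIntegral_congr_fun measurableSet_Ico
      intro t _
      simp only [hg, haff t]
    rw [heq, key, hper, sub_self]
  rw [hstep1, hstep2]
  rw [MeasureTheory.setIntegral_congr_fun (MeasurableSet.univ_pi fun _ => measurableSet_Ico) (fun y _ => hinner y)]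
  simp

end Integration
section Identities

lemma pdS_mul {a b : V3 → ℝ} (ha : SmoothS a) (hb : SmoothS b) (j : Fin 3) :
    pdS j (fun x => a x * b x) = fun x => pdS j a x * b x + a x * pdS j b x := by
  funext x
  simp only [pdS, fderiv_fun_mul ha.diffAt hb.diffAt, ContinuousLinearMap.add_apply,
    ContinuousLinearMap.smul_apply, smul_eq_mul]
  ring

lemma pdS_sum {ι : Type*} (s : Finset ι) {A : ι → V3 → ℝ} (hA : ∀ i, SmoothS (A i))
    (j : Fin 3) : pdS j (fun x => ∑ i ∈ s, A i x) = fun x => ∑ i ∈ s, pdS j (A i) x := by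
  funext x
  simp only [pdS, fderiv_fun_sum (fun i _ => (hA i).diffAt), ContinuousLinearMap.sum_apply]

lemma periodicS_comp {w : VF} (hw : Periodic3 w) (i : Fin 3) :
    PeriodicS (fun y => w y i) := fun x k => congrFun (hw x k) i

lemma periodicS_mul {a b : V3 → ℝ} (ha : PeriodicS a) (hb : PeriodicS b) :
    PeriodicS (fun x => a x * b x) := by
  intro x k
  show a _ * b _ = a x * b x
  rw [ha x k, hb x k]

lemma measurableSet_cube : MeasurableSet cube := by
  unfold cube
  exact MeasurableSet.univ_pi fun _ => measurableSet_Ico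

lemma grad_eq_pdS (q : V3 → ℝ) (x : V3) (i : Fin 3) : grad q x i = pdS i q x := rfl

/-- orthogonality of gradients to divergence-free fields -/
lemma integral_grad_pair {q : V3 → ℝ} {w : VF} (hq : SmoothS q) (hqp : PeriodicS q)
    (hw : SmoothVF w) (hwp : Periodic3 w) (hdiv : DivFree w) :
    (∫ x in cube, ∑ i, grad q x i * w x i) = 0 := by
  have hpoint : ∀ x, (∑ i, grad q x i * w x i)
      = ∑ i, pdS i (fun y => q y * w y i) x := by
    intro x
    have : ∀ i : Fin 3, pdS i (fun y => q y * w y i) x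
        = pdS i q x * w x i + q x * pdS i (fun y => w y i) x := by
      intro i
      rw [pdS_mul hq (smooth_comp_apply hw i) i]
    simp only [this, grad_eq_pdS]
    rw [Finset.sum_add_distrib]
    have hz : ∑ i, q x * pdS i (fun y => w y i) x = 0 := by
      rw [← Finset.mul_sum]
      have : ∑ i : Fin 3, pdS i (fun y => w y i) x = ∑ i : Fin 3, pd i w x i := by
        apply Finset.sum_congr rfl
        intro i _
        rw [pd_apply hw i i x]
      rw [this, hdiv x, mul_zero]
    rw [hz, add_zero]
  rw [MeasureTheory.setIntegral_congr_fun (measurableSet_cube)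
    (fun x _ => hpoint x)]
  rw [MeasureTheory.integral_finset_sum]
  · apply Finset.sum_eq_zero
    intro i _
    exact integral_pdS_eq_zero (hq.mul (smooth_comp_apply hw i))
      (periodicS_mul hqp (periodicS_comp hwp i)) i
  · intro i _
    exact integrableOn_cube (smoothS_pdS (hq.mul (smooth_comp_apply hw i)) i).continuous

/-- antisymmetry: transport term paired with itself vanishes -/
lemma integral_transport_pair {ξ h : VF} (hξ : SmoothVF ξ) (hξp : Periodic3 ξ)
    (hdiv : DivFree ξ) (hh : SmoothVF h) (hhp : Periodic3 h) :
    (∫ x in cube, ∑ i, transport ξ h x i * h x i) = 0 := by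
  set Q : V3 → ℝ := fun y => ∑ i, h y i * h y i with hQ
  have hQs : SmoothS Q := ContDiff.sum fun i _ => (smooth_comp_apply hh i).mul (smooth_comp_apply hh i)
  have hQp : PeriodicS Q := fun x k => by
    simp only [hQ]
    exact Finset.sum_congr rfl fun i _ => by rw [congrFun (hhp x k) i]
  have hpdQ : ∀ (j : Fin 3) (x : V3), pdS j Q x = ∑ i, (pd j h x i * h x i + h x i * pd j h x i) := by
    intro j x
    rw [hQ, pdS_sum (Finset.univ) (fun i => (smooth_comp_apply hh i).mul (smooth_comp_apply hh i)) j]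
    apply Finset.sum_congr rfl
    intro i _
    rw [pdS_mul (smooth_comp_apply hh i) (smooth_comp_apply hh i) j, pd_apply hh j i x]
  have hpoint : ∀ x, (2:ℝ) * (∑ i, transport ξ h x i * h x i)
      = ∑ j, pdS j (fun y => ξ y j * Q y) x := by
    intro x
    have e1 : (∑ i, transport ξ h x i * h x i)
        = ∑ j, ξ x j * (∑ i, pd j h x i * h x i) := by
      simp only [transport, Finset.sum_apply, Pi.smul_apply, smul_eq_mul, Finset.sum_mul]
      rw [Finset.sum_comm]
      apply Finset.sum_congr rfl
      intro j _
      rw [Finset.mul_sum]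
      apply Finset.sum_congr rfl
      intro i _
      ring
    have e2 : ∀ j : Fin 3, pdS j (fun y => ξ y j * Q y) x
        = pd j ξ x j * Q x + ξ x j * pdS j Q x := by
      intro j
      rw [pdS_mul (smooth_comp_apply hξ j) hQs j, pd_apply hξ j j x]
    simp only [e2, hpdQ]
    rw [Finset.sum_add_distrib]
    have hz : ∑ j, pd j ξ x j * Q x = 0 := by
      rw [← Finset.sum_mul, hdiv x, zero_mul]
    rw [hz, zero_add, e1, Finset.mul_sum]
    apply Finset.sum_congr rfl
    intro j _
    rw [Finset.mul_sum, Finset.mul_sum, Finset.mul_sum]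
    apply Finset.sum_congr rfl
    intro i _
    ring
  have h2 : (2:ℝ) * (∫ x in cube, ∑ i, transport ξ h x i * h x i) = 0 := by
    rw [← MeasureTheory.integral_const_mul]
    rw [MeasureTheory.setIntegral_congr_fun (measurableSet_cube)
      (fun x _ => hpoint x)]
    rw [MeasureTheory.integral_finset_sum]
    · apply Finset.sum_eq_zero
      intro j _
      exact integral_pdS_eq_zero ((smooth_comp_apply hξ j).mul hQs)
        (periodicS_mul (periodicS_comp hξp j) hQp) j
    · intro j _
      exact integrableOn_cube (smoothS_pdS ((smooth_comp_apply hξ j).mul hQs) j).continuous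
  linarith

end Identities
section ScalarDm

/-- scalar iterated derivative -/
def DmS (α : ℕ × ℕ × ℕ) (q : V3 → ℝ) : V3 → ℝ :=
  (pdS 0)^[α.1] ((pdS 1)^[α.2.1] ((pdS 2)^[α.2.2] q))

lemma smoothS_pdS_iter {q : V3 → ℝ} (hq : SmoothS q) (j : Fin 3) (n : ℕ) :
    SmoothS ((pdS j)^[n] q) := by
  induction n with
  | zero => exact hq
  | succ n ih => rw [Function.iterate_succ_apply']; exact smoothS_pdS ih j

lemma smoothS_DmS {q : V3 → ℝ} (hq : SmoothS q) (α : ℕ × ℕ × ℕ) : SmoothS (DmS α q) :=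
  smoothS_pdS_iter (smoothS_pdS_iter (smoothS_pdS_iter hq 2 α.2.2) 1 α.2.1) 0 α.1

lemma periodicS_pdS {q : V3 → ℝ} (hqs : SmoothS q) (hq : PeriodicS q) (j : Fin 3) :
    PeriodicS (pdS j q) := by
  intro x k
  set c : V3 := (fun i => (k i : ℝ)) with hc
  have h : (fun y : V3 => q (y + c)) = q := funext fun y => hq y k
  have h1 : HasFDerivAt (fun y : V3 => y + c) (ContinuousLinearMap.id ℝ V3) x := by
    simpa using (hasFDerivAt_id (𝕜 := ℝ) x).add_const c
  have h2 : HasFDerivAt (fun y : V3 => q (y + c))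
      ((fderiv ℝ q (x + c)).comp (ContinuousLinearMap.id ℝ V3)) x :=
    (hqs.diffAt.hasFDerivAt).comp x h1
  rw [h] at h2
  show fderiv ℝ q (x + c) _ = fderiv ℝ q x _
  rw [h2.fderiv]
  rfl

lemma periodicS_DmS {q : V3 → ℝ} (hqs : SmoothS q) (hq : PeriodicS q) (α : ℕ × ℕ × ℕ) :
    PeriodicS (DmS α q) := by
  have step : ∀ (j : Fin 3) (n : ℕ) (p : V3 → ℝ), SmoothS p → PeriodicS p →
      PeriodicS ((pdS j)^[n] p) := by
    intro j n
    induction n with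
    | zero => intro p _ hp; exact hp
    | succ n ih =>
      intro p hps hp
      rw [Function.iterate_succ_apply']
      exact periodicS_pdS (smoothS_pdS_iter hps j n) (ih p hps hp) j
  exact step 0 α.1 _ (smoothS_pdS_iter (smoothS_pdS_iter hqs 2 α.2.2) 1 α.2.1)
    (step 1 α.2.1 _ (smoothS_pdS_iter hqs 2 α.2.2) (step 2 α.2.2 q hqs hq))

lemma pd_apply_iter {F : VF} (hF : SmoothVF F) (j : Fin 3) (n : ℕ) (i : Fin 3) :
    (fun x => ((pd j)^[n] F x) i) = (pdS j)^[n] (fun y => F y i) := by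
  induction n with
  | zero => rfl
  | succ n ih =>
    rw [Function.iterate_succ_apply', Function.iterate_succ_apply', ← ih]
    funext x
    exact pd_apply (smooth_pd_iter hF j n) j i x

lemma Dm_apply {F : VF} (hF : SmoothVF F) (α : ℕ × ℕ × ℕ) (i : Fin 3) :
    (fun x => (Dm α F x) i) = DmS α (fun y => F y i) := by
  unfold Dm DmS
  rw [pd_apply_iter (smooth_pd_iter (smooth_pd_iter hF 2 α.2.2) 1 α.2.1) 0 α.1 i,
    pd_apply_iter (smooth_pd_iter hF 2 α.2.2) 1 α.2.1 i,
    pd_apply_iter hF 2 α.2.2 i]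

lemma pdS_iter_sum {ι : Type*} (s : Finset ι) {A : ι → V3 → ℝ} (hA : ∀ i, SmoothS (A i))
    (j : Fin 3) (n : ℕ) :
    (pdS j)^[n] (fun x => ∑ i ∈ s, A i x) = fun x => ∑ i ∈ s, (pdS j)^[n] (A i) x := by
  induction n with
  | zero => rfl
  | succ n ih =>
    rw [Function.iterate_succ_apply', ih, pdS_sum s (fun i => smoothS_pdS_iter (hA i) j n) j]
    funext x
    apply Finset.sum_congr rfl
    intro i _
    rw [Function.iterate_succ_apply']

lemma DmS_sum {ι : Type*} (s : Finset ι) {A : ι → V3 → ℝ} (hA : ∀ i, SmoothS (A i))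
    (α : ℕ × ℕ × ℕ) :
    DmS α (fun x => ∑ i ∈ s, A i x) = fun x => ∑ i ∈ s, DmS α (A i) x := by
  unfold DmS
  rw [pdS_iter_sum s hA 2 α.2.2, pdS_iter_sum s (fun i => smoothS_pdS_iter (hA i) 2 α.2.2) 1 α.2.1,
    pdS_iter_sum s (fun i => smoothS_pdS_iter (smoothS_pdS_iter (hA i) 2 α.2.2) 1 α.2.1) 0 α.1]

lemma pdS_const (c : ℝ) (j : Fin 3) : pdS j (fun _ => c) = fun _ => (0:ℝ) := by
  funext x
  simp [pdS]

lemma DmS_zero (α : ℕ × ℕ × ℕ) : DmS α (fun _ => (0:ℝ)) = fun _ => (0:ℝ) := by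
  have h : ∀ (j : Fin 3) (n : ℕ), (pdS j)^[n] (fun _ => (0:ℝ)) = fun _ => (0:ℝ) := by
    intro j n
    induction n with
    | zero => rfl
    | succ n ih => rw [Function.iterate_succ_apply, pdS_const, ih]
  unfold DmS
  rw [h, h, h]

/-- pd commutes with Dm -/
lemma Dm_pd {F : VF} (hF : SmoothVF F) (i : Fin 3) (α : ℕ × ℕ × ℕ) :
    Dm α (pd i F) = pd i (Dm α F) := by
  unfold Dm
  rw [← pd_comm_iter hF i 2 α.2.2, ← pd_comm_iter (smooth_pd_iter hF 2 α.2.2) i 1 α.2.1,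
    ← pd_comm_iter (smooth_pd_iter (smooth_pd_iter hF 2 α.2.2) 1 α.2.1) i 0 α.1]

lemma divfree_Dm {F : VF} (hF : SmoothVF F) (hdiv : DivFree F) (α : ℕ × ℕ × ℕ) :
    DivFree (Dm α F) := by
  intro x
  have e1 : ∀ i : Fin 3, pd i (Dm α F) x i = DmS α (fun y => pd i F y i) x := by
    intro i
    rw [← Dm_pd hF i α]
    exact congrFun (Dm_apply (smooth_pd hF i) α i) x
  simp only [e1]
  calc ∑ i : Fin 3, DmS α (fun y => pd i F y i) x
      = DmS α (fun y => ∑ i : Fin 3, pd i F y i) x :=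
        (congrFun (DmS_sum Finset.univ (fun i => smooth_comp_apply (smooth_pd hF i) i) α) x).symm
    _ = DmS α (fun _ => (0:ℝ)) x := by
        rw [show (fun y => ∑ i : Fin 3, pd i F y i) = (fun _ => (0:ℝ)) from funext hdiv]
    _ = 0 := congrFun (DmS_zero α) x

end ScalarDm
section GradConst

lemma pdS_comm {q : V3 → ℝ} (hq : SmoothS q) (i j : Fin 3) :
    pdS i (pdS j q) = pdS j (pdS i q) := by
  funext x
  have hsym : IsSymmSndFDerivAt ℝ q x :=
    hq.contDiffAt.isSymmSndFDerivAt (by simp only [minSmoothness_of_isRCLikeNormedField]; exact WithTop.coe_le_coe.mpr le_top)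
  have hC : ContDiff ℝ (⊤:ℕ∞) (fderiv ℝ q) := hq.fderiv_right (le_refl _)
  have hd : DifferentiableAt ℝ (fderiv ℝ q) x :=
    (hC.differentiable (by simp)) x
  have e1 : ∀ a b : V3, fderiv ℝ (fun y => fderiv ℝ q y b) x a = fderiv ℝ (fderiv ℝ q) x a b := by
    intro a b
    rw [fderiv_clm_apply hd (differentiableAt_const b)]
    simp
  show fderiv ℝ (fun y => fderiv ℝ q y (Pi.single j 1)) x (Pi.single i 1) =
    fderiv ℝ (fun y => fderiv ℝ q y (Pi.single i 1)) x (Pi.single j 1)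
  rw [e1, e1, hsym.eq]

lemma smooth_grad {q : V3 → ℝ} (hq : SmoothS q) : SmoothVF (grad q) :=
  contDiff_pi.mpr fun i => (hq.fderiv_right (le_refl _)).clm_apply contDiff_const

lemma periodic_grad {q : V3 → ℝ} (hqs : SmoothS q) (hq : PeriodicS q) :
    Periodic3 (grad q) := by
  intro x k
  funext i
  exact periodicS_pdS hqs hq i x k

lemma pd_grad {q : V3 → ℝ} (hq : SmoothS q) (j : Fin 3) :
    pd j (grad q) = grad (pdS j q) := by
  funext x i
  have h1 : pd j (grad q) x i = pdS j (fun y => grad q y i) x :=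
    pd_apply (smooth_grad hq) j i x
  have h2 : (fun y => grad q y i) = pdS i q := rfl
  rw [h1, h2, pdS_comm hq j i]
  rfl

lemma pd_iter_grad {q : V3 → ℝ} (hq : SmoothS q) (j : Fin 3) (n : ℕ) :
    (pd j)^[n] (grad q) = grad ((pdS j)^[n] q) := by
  induction n with
  | zero => rfl
  | succ n ih =>
    rw [Function.iterate_succ_apply', Function.iterate_succ_apply', ih,
      pd_grad (smoothS_pdS_iter hq j n) j]

lemma Dm_grad {q : V3 → ℝ} (hq : SmoothS q) (α : ℕ × ℕ × ℕ) :
    Dm α (grad q) = grad (DmS α q) := by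
  unfold Dm DmS
  rw [pd_iter_grad hq 2 α.2.2, pd_iter_grad (smoothS_pdS_iter hq 2 α.2.2) 1 α.2.1,
    pd_iter_grad (smoothS_pdS_iter (smoothS_pdS_iter hq 2 α.2.2) 1 α.2.1) 0 α.1]

lemma pd_iter_add {F G : VF} (hF : SmoothVF F) (hG : SmoothVF G) (j : Fin 3) (n : ℕ) :
    (pd j)^[n] (fun x => F x + G x) = fun x => (pd j)^[n] F x + (pd j)^[n] G x := by
  induction n with
  | zero => rfl
  | succ n ih =>
    rw [Function.iterate_succ_apply', ih, pd_add (smooth_pd_iter hF j n) (smooth_pd_iter hG j n) j,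
      Function.iterate_succ_apply', Function.iterate_succ_apply']

lemma smoothVF_add {F G : VF} (hF : SmoothVF F) (hG : SmoothVF G) :
    SmoothVF (fun x => F x + G x) := hF.add hG

lemma Dm_add {F G : VF} (hF : SmoothVF F) (hG : SmoothVF G) (α : ℕ × ℕ × ℕ) :
    Dm α (fun x => F x + G x) = fun x => Dm α F x + Dm α G x := by
  unfold Dm
  rw [pd_iter_add hF hG 2 α.2.2, pd_iter_add (smooth_pd_iter hF 2 α.2.2)
    (smooth_pd_iter hG 2 α.2.2) 1 α.2.1,
    pd_iter_add (smooth_pd_iter (smooth_pd_iter hF 2 α.2.2) 1 α.2.1)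
    (smooth_pd_iter (smooth_pd_iter hG 2 α.2.2) 1 α.2.1) 0 α.1]

lemma Dm_const (c : V3) (α : ℕ × ℕ × ℕ) : ∃ c' : V3, Dm α (fun _ => c) = fun _ => c' := by
  have h : ∀ (j : Fin 3) (n : ℕ) (c : V3), ∃ c', (pd j)^[n] (fun _ => c) = fun _ => c' := by
    intro j n
    induction n with
    | zero => intro c; exact ⟨c, rfl⟩
    | succ n ih =>
      intro c
      obtain ⟨c', hc'⟩ := ih c
      exact ⟨fderiv ℝ (fun _ : V3 => c') 0 (Pi.single j 1), by
        rw [Function.iterate_succ_apply', hc']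
        funext x
        show fderiv ℝ (fun _ : V3 => c') x _ = _
        simp [fderiv_const]⟩
  obtain ⟨c1, h1⟩ := h 2 α.2.2 c
  obtain ⟨c2, h2⟩ := h 1 α.2.1 c1
  obtain ⟨c3, h3⟩ := h 0 α.1 c2
  exact ⟨c3, by unfold Dm; rw [h1, h2, h3]⟩

/-- each component of each derivative of a good field has zero mean -/
lemma comp_int_zero {F : VF} (hF : SmoothVF F) (hFp : Periodic3 F) (hFz : MeanZero F)
    (α : ℕ × ℕ × ℕ) (i : Fin 3) : (∫ x in cube, Dm α F x i) = 0 := by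
  rcases eq_or_ne α (0,0,0) with rfl | hne
  · have hint : Integrable F (volume.restrict cube) := integrableOn_cube hF.continuous
    have hcomm := (ContinuousLinearMap.proj (R := ℝ) (φ := fun _ : Fin 3 => ℝ) i).integral_comp_comm hint
    have : (∫ x in cube, F x i) = (∫ x in cube, F x) i := hcomm
    rw [show Dm (0,0,0) F = F from rfl, this, hFz]
    rfl
  · -- α ≠ 0 : Dm α F is a pure derivative, integrate by parts
    obtain ⟨a, b, c⟩ := α
    have key : ∃ (k : Fin 3) (β : ℕ × ℕ × ℕ), Dm (a,b,c) F = pd k (Dm β F) := by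
      rcases Nat.eq_zero_or_pos a with ha | ha
      · rcases Nat.eq_zero_or_pos b with hb | hb
        · rcases Nat.eq_zero_or_pos c with hc | hc
          · exact absurd (by subst ha; subst hb; subst hc; rfl) hne
          · refine ⟨2, (a, b, c-1), ?_⟩
            rw [pd_Dm hF 2 (a,b,c-1), show bump 2 (a,b,c-1) = (a,b,c) from ?_]
            have h2 : (2 : Fin 3) ≠ 0 := by decide
            have h2' : (2 : Fin 3) ≠ 1 := by decide
            simp only [bump, if_neg h2, if_neg h2']
            have : c - 1 + 1 = c := by omega
            rw [this]
        · refine ⟨1, (a, b-1, c), ?_⟩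
          rw [pd_Dm hF 1 (a,b-1,c), show bump 1 (a,b-1,c) = (a,b,c) from ?_]
          have h1 : (1 : Fin 3) ≠ 0 := by decide
          simp only [bump, if_neg h1, if_pos rfl, if_true]
          have : b - 1 + 1 = b := by omega
          rw [this]
      · refine ⟨0, (a-1, b, c), ?_⟩
        rw [pd_Dm hF 0 (a-1,b,c), show bump 0 (a-1,b,c) = (a,b,c) from ?_]
        simp only [bump, if_pos rfl, if_true]
        have : a - 1 + 1 = a := by omega
        rw [this]
    obtain ⟨k, β, hk⟩ := key
    rw [hk]
    have hpt : ∀ x, pd k (Dm β F) x i = pdS k (fun y => Dm β F y i) x :=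
      fun x => pd_apply (smooth_Dm hF β) k i x
    rw [MeasureTheory.setIntegral_congr_fun measurableSet_cube (fun x _ => hpt x)]
    exact integral_pdS_eq_zero (smooth_comp_apply (smooth_Dm hF β) i)
      (periodicS_comp (periodic_Dm hF hFp β) i) k

end GradConst
section L2

lemma cont_pair {F G : VF} (hF : Continuous F) (hG : Continuous G) :
    Continuous (fun x => ∑ i, F x i * G x i) :=
  continuous_finset_sum _ fun i _ =>
    ((continuous_apply i).comp hF).mul ((continuous_apply i).comp hG)

lemma integrableOn_pair {F G : VF} (hF : Continuous F) (hG : Continuous G) :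
    IntegrableOn (fun x => ∑ i, F x i * G x i) cube volume :=
  integrableOn_cube (cont_pair hF hG)

lemma L2inner_self_nonneg (F : VF) : 0 ≤ L2inner F F :=
  MeasureTheory.setIntegral_nonneg measurableSet_cube
    (fun x _ => Finset.sum_nonneg fun i _ => mul_self_nonneg _)

lemma L2inner_add_left {F G H : VF} (hF : Continuous F) (hG : Continuous G) (hH : Continuous H) :
    L2inner (fun x => F x + G x) H = L2inner F H + L2inner G H := by
  unfold L2inner
  have hpt : ∀ x : V3, (∑ i, (F x i + G x i) * H x i)
      = (∑ i, F x i * H x i) + (∑ i, G x i * H x i) := by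
    intro x
    rw [← Finset.sum_add_distrib]
    exact Finset.sum_congr rfl fun i _ => by ring
  calc (∫ x in cube, ∑ i, (F x + G x) i * H x i)
      = ∫ x in cube, ((∑ i, F x i * H x i) + (∑ i, G x i * H x i)) := by
        apply MeasureTheory.setIntegral_congr_fun measurableSet_cube
        intro x _
        exact hpt x
    _ = _ := MeasureTheory.integral_add (integrableOn_pair hF hH) (integrableOn_pair hG hH)

/-- Cauchy–Schwarz for L2inner -/
lemma L2inner_sq_le {F G : VF} (hF : Continuous F) (hG : Continuous G) :
    (L2inner F G) ^ 2 ≤ L2inner F F * L2inner G G := by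
  have key : ∀ t : ℝ, 0 ≤ (L2inner G G) * (t * t) + (2 * L2inner F G) * t + L2inner F F := by
    intro t
    have hpt : ∀ x : V3, (∑ i, (F x i + t * G x i) * (F x i + t * G x i))
        = (t * t) * (∑ i, G x i * G x i) + ((2 * t) * (∑ i, F x i * G x i)
          + (∑ i, F x i * F x i)) := by
      intro x
      rw [Finset.mul_sum, Finset.mul_sum, ← Finset.sum_add_distrib, ← Finset.sum_add_distrib]
      exact Finset.sum_congr rfl fun i _ => by ring
    have hnn : 0 ≤ ∫ x in cube, ∑ i, (F x i + t * G x i) * (F x i + t * G x i) :=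
      MeasureTheory.setIntegral_nonneg measurableSet_cube
        (fun x _ => Finset.sum_nonneg fun i _ => mul_self_nonneg _)
    have i1 : IntegrableOn (fun x => (t*t) * ∑ i, G x i * G x i) cube volume :=
      (integrableOn_pair hG hG).const_mul _
    have i2 : IntegrableOn (fun x => (2*t) * ∑ i, F x i * G x i) cube volume :=
      (integrableOn_pair hF hG).const_mul _
    have i3 : IntegrableOn (fun x => ∑ i, F x i * F x i) cube volume := integrableOn_pair hF hF
    have i23 : IntegrableOn (fun x => (2*t) * (∑ i, F x i * G x i) + ∑ i, F x i * F x i)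
        cube volume := i2.add i3
    have heq : (∫ x in cube, ∑ i, (F x i + t * G x i) * (F x i + t * G x i))
        = (t * t) * L2inner G G + ((2 * t) * L2inner F G + L2inner F F) := by
      rw [MeasureTheory.setIntegral_congr_fun measurableSet_cube (fun x _ => hpt x),
        MeasureTheory.integral_add i1 i23, MeasureTheory.integral_add i2 i3,
        MeasureTheory.integral_const_mul, MeasureTheory.integral_const_mul]
      rfl
    rw [heq] at hnn
    nlinarith [hnn]
  have hd := discrim_le_zero key
  unfold discrim at hd
  nlinarith [hd]

lemma sobNormSq_nonneg (m : ℕ) (f : VF) : 0 ≤ sobNormSq m f :=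
  Finset.sum_nonneg fun α _ => L2inner_self_nonneg _

lemma L2_term_le_sob {f : VF} {m : ℕ} {α : ℕ × ℕ × ℕ} (hα : α ∈ midx m) :
    L2inner (Dm α f) (Dm α f) ≤ sobNormSq m f :=
  Finset.single_le_sum (f := fun α => L2inner (Dm α f) (Dm α f))
    (fun β _ => L2inner_self_nonneg _) hα

lemma mem_midx_of_mdeg_le {m : ℕ} {α : ℕ × ℕ × ℕ} (h : mdeg α ≤ m) : α ∈ midx m := by
  obtain ⟨a, b, c⟩ := α
  have h' : a + b + c ≤ m := h
  unfold midx
  exact Finset.mem_filter.mpr ⟨by simp only [Finset.mem_product, Finset.mem_range]; omega, h⟩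

end L2
section Decomp

abbrev TIdx := (ℕ × ℕ × ℕ) × (ℕ × ℕ × ℕ) × Fin 3

/-- an elementary remainder term: D^β ξ^j • ∂_j D^γ f -/
def termF (ξ f : VF) (t : TIdx) : VF :=
  fun x => Dm t.1 ξ x t.2.2 • pd t.2.2 (Dm t.2.1 f) x

/-- pointwise sum of a list of elementary terms -/
def sumT (ξ f : VF) (L : List TIdx) : VF :=
  fun x => (L.map (fun t => termF ξ f t x)).sum

lemma sumT_nil (ξ f : VF) : sumT ξ f [] = fun _ => (0 : V3) := rfl

lemma sumT_cons (ξ f : VF) (t : TIdx) (L : List TIdx) :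
    sumT ξ f (t :: L) = fun x => termF ξ f t x + sumT ξ f L x := by
  funext x
  simp [sumT]

lemma sumT_append (ξ f : VF) (L1 L2 : List TIdx) :
    sumT ξ f (L1 ++ L2) = fun x => sumT ξ f L1 x + sumT ξ f L2 x := by
  funext x
  simp [sumT]

lemma bump0' (a b c : ℕ) : bump 0 (a,b,c) = (a+1,b,c) := if_pos rfl

lemma bump1' (a b c : ℕ) : bump 1 (a,b,c) = (a,b+1,c) := by
  rw [bump, if_neg (by decide), if_pos rfl]

lemma bump2' (a b c : ℕ) : bump 2 (a,b,c) = (a,b,c+1) := by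
  rw [bump, if_neg (by decide), if_neg (by decide)]

lemma smooth_termF {ξ f : VF} (hξ : SmoothVF ξ) (hf : SmoothVF f) (t : TIdx) :
    SmoothVF (termF ξ f t) :=
  (smooth_comp_apply (smooth_Dm hξ t.1) t.2.2).smul (smooth_pd (smooth_Dm hf t.2.1) t.2.2)

lemma smooth_sumT {ξ f : VF} (hξ : SmoothVF ξ) (hf : SmoothVF f) (L : List TIdx) :
    SmoothVF (sumT ξ f L) := by
  induction L with
  | nil => rw [sumT_nil]; exact contDiff_const
  | cons t L ih =>
    rw [sumT_cons]
    exact (smooth_termF hξ hf t).add ih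

lemma smooth_transport {ξ H : VF} (hξ : SmoothVF ξ) (hH : SmoothVF H) :
    SmoothVF (transport ξ H) :=
  ContDiff.sum fun j _ => (smooth_comp_apply hξ j).smul (smooth_pd hH j)

lemma periodic_termF {ξ f : VF} (hξ : SmoothVF ξ) (hf : SmoothVF f)
    (hξp : Periodic3 ξ) (hfp : Periodic3 f) (t : TIdx) :
    Periodic3 (termF ξ f t) := by
  intro x k
  unfold termF
  rw [periodic_Dm hξ hξp t.1 x k, periodic_pd (smooth_Dm hf t.2.1)
    (periodic_Dm hf hfp t.2.1) t.2.2 x k]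

lemma pd_finsum {ι : Type*} (s : Finset ι) {A : ι → VF} (hA : ∀ i, SmoothVF (A i)) (k : Fin 3) :
    pd k (fun x => ∑ i ∈ s, A i x) = fun x => ∑ i ∈ s, pd k (A i) x := by
  funext x
  show fderiv ℝ (fun y => ∑ i ∈ s, A i y) x (Pi.single k 1) = _
  rw [fderiv_fun_sum fun i _ => (hA i).diffAt]
  simp only [ContinuousLinearMap.sum_apply]
  rfl

lemma pd_termF {ξ f : VF} (hξ : SmoothVF ξ) (hf : SmoothVF f) (k : Fin 3) (t : TIdx) :
    pd k (termF ξ f t) = fun x => termF ξ f (t.1, bump k t.2.1, t.2.2) x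
      + termF ξ f (bump k t.1, t.2.1, t.2.2) x := by
  obtain ⟨β, γ, j⟩ := t
  have hc : SmoothS (fun x => Dm β ξ x j) := smooth_comp_apply (smooth_Dm hξ β) j
  have hG : SmoothVF (pd j (Dm γ f)) := smooth_pd (smooth_Dm hf γ) j
  have e1 : pd k (pd j (Dm γ f)) = pd j (Dm (bump k γ) f) := by
    rw [pd_comm (smooth_Dm hf γ) k j, pd_Dm hf k γ]
  have e2 : ∀ x, pdS k (fun y => Dm β ξ y j) x = Dm (bump k β) ξ x j := by
    intro x
    rw [← pd_apply (smooth_Dm hξ β) k j x, pd_Dm hξ k β]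
  show pd k (fun x => Dm β ξ x j • pd j (Dm γ f) x) = _
  rw [pd_smul hc hG k]
  funext x
  simp only [e1, e2, termF]

lemma pd_sumT {ξ f : VF} (hξ : SmoothVF ξ) (hf : SmoothVF f) (k : Fin 3) (L : List TIdx) :
    pd k (sumT ξ f L) = fun x => sumT ξ f (L.map fun t => (t.1, bump k t.2.1, t.2.2)) x
      + sumT ξ f (L.map fun t => (bump k t.1, t.2.1, t.2.2)) x := by
  induction L with
  | nil =>
    rw [sumT_nil]
    funext x
    rw [pd_const 0 k]
    simp [sumT_nil]
  | cons t L ih =>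
    rw [sumT_cons, pd_add (smooth_termF hξ hf t) (smooth_sumT hξ hf L) k,
      pd_termF hξ hf k t, ih]
    funext x
    simp only [List.map_cons, sumT_cons]
    abel

lemma pd_transport_Dm {ξ f : VF} (hξ : SmoothVF ξ) (hf : SmoothVF f) (k : Fin 3)
    (α : ℕ × ℕ × ℕ) :
    pd k (transport ξ (Dm α f)) = fun x => transport ξ (Dm (bump k α) f) x
      + sumT ξ f [(bump k (0,0,0), α, 0), (bump k (0,0,0), α, 1), (bump k (0,0,0), α, 2)] x := by
  set A : Fin 3 → VF := fun j y => ξ y j • pd j (Dm α f) y with hA'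
  have hA : ∀ j : Fin 3, SmoothVF (A j) :=
    fun j => (smooth_comp_apply hξ j).smul (smooth_pd (smooth_Dm hf α) j)
  have hT : transport ξ (Dm α f) = fun x => ∑ j : Fin 3, A j x := rfl
  have e4 : pd k ξ = Dm (bump k (0,0,0)) ξ := by rw [← pd_Dm hξ k (0,0,0)]; rfl
  have e2 : ∀ j : Fin 3, pd k (pd j (Dm α f)) = pd j (Dm (bump k α) f) := by
    intro j
    rw [pd_comm (smooth_Dm hf α) k j, pd_Dm hf k α]
  have e1 : ∀ j : Fin 3, pd k (A j)
      = fun x => ξ x j • pd j (Dm (bump k α) f) x + termF ξ f (bump k (0,0,0), α, j) x := by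
    intro j
    rw [hA']
    rw [pd_smul (smooth_comp_apply hξ j) (smooth_pd (smooth_Dm hf α) j) k]
    funext x
    simp only [e2]
    have e5 : pdS k (fun y => ξ y j) x = Dm (bump k (0,0,0)) ξ x j := by
      rw [← pd_apply hξ k j x, e4]
    rw [e5]
    simp only [termF]
  rw [hT, pd_finsum Finset.univ hA k]
  funext x
  simp only [e1]
  rw [Finset.sum_add_distrib]
  congr 1

/-- the main inductive decomposition -/
lemma decomp {ξ f : VF} (hξ : SmoothVF ξ) (hf : SmoothVF f) (α : ℕ × ℕ × ℕ) :
    ∃ L : List TIdx,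
      (∀ t ∈ L, 1 ≤ mdeg t.1 ∧ mdeg t.1 + mdeg t.2.1 ≤ mdeg α) ∧
      L.length ≤ 5 ^ mdeg α ∧
      Dm α (transport ξ f) = fun x => transport ξ (Dm α f) x + sumT ξ f L x := by
  have hu : SmoothVF (transport ξ f) := smooth_transport hξ hf
  have step : ∀ (k : Fin 3) (β : ℕ × ℕ × ℕ) (L : List TIdx),
      (∀ t ∈ L, 1 ≤ mdeg t.1 ∧ mdeg t.1 + mdeg t.2.1 ≤ mdeg β) →
      L.length ≤ 5 ^ mdeg β →
      Dm β (transport ξ f) = (fun x => transport ξ (Dm β f) x + sumT ξ f L x) →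
      ∃ L' : List TIdx,
        (∀ t ∈ L', 1 ≤ mdeg t.1 ∧ mdeg t.1 + mdeg t.2.1 ≤ mdeg (bump k β)) ∧
        L'.length ≤ 5 ^ mdeg (bump k β) ∧
        Dm (bump k β) (transport ξ f)
          = fun x => transport ξ (Dm (bump k β) f) x + sumT ξ f L' x := by
    intro k β L hcond hlen heq
    refine ⟨[(bump k (0,0,0), β, 0), (bump k (0,0,0), β, 1), (bump k (0,0,0), β, 2)]
      ++ (L.map fun t => (t.1, bump k t.2.1, t.2.2))
      ++ (L.map fun t => (bump k t.1, t.2.1, t.2.2)), ?_, ?_, ?_⟩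
    · intro t ht
      rw [mdeg_bump]
      simp only [List.mem_append, List.mem_map] at ht
      have hm0 : mdeg (bump k (0,0,0)) = 1 := by rw [mdeg_bump]; rfl
      rcases ht with (h3 | ⟨s, hs, rfl⟩) | ⟨s, hs, rfl⟩
      · have h4 : t.1 = bump k (0,0,0) ∧ t.2.1 = β := by
          simp only [List.mem_cons, List.not_mem_nil, or_false] at h3
          rcases h3 with rfl | rfl | rfl <;> exact ⟨rfl, rfl⟩
        rw [h4.1, h4.2, hm0]
        omega
      · obtain ⟨h1, h2⟩ := hcond s hs
        refine ⟨h1, ?_⟩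
        show mdeg s.1 + mdeg (bump k s.2.1) ≤ mdeg β + 1
        rw [mdeg_bump]
        omega
      · obtain ⟨h1, h2⟩ := hcond s hs
        constructor
        · show 1 ≤ mdeg (bump k s.1)
          rw [mdeg_bump]
          omega
        · show mdeg (bump k s.1) + mdeg s.2.1 ≤ mdeg β + 1
          rw [mdeg_bump]
          omega
    · rw [mdeg_bump]
      simp only [List.length_append, List.length_map, List.length_cons, List.length_nil]
      have h1 : 1 ≤ 5 ^ mdeg β := Nat.one_le_pow _ _ (by norm_num)
      rw [pow_succ]
      omega
    · rw [(pd_Dm hu k β).symm, heq, pd_add (smooth_transport hξ (smooth_Dm hf β))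
        (smooth_sumT hξ hf L) k, pd_transport_Dm hξ hf k β, pd_sumT hξ hf k L]
      funext x
      simp only [sumT_append]
      abel
  obtain ⟨a, b, c⟩ := α
  induction a with
  | zero =>
    induction b with
    | zero =>
      induction c with
      | zero =>
        refine ⟨[], fun t ht => absurd ht List.not_mem_nil, by simp, ?_⟩
        funext x
        show transport ξ f x = transport ξ f x + 0
        rw [add_zero]
      | succ c ihc =>
        obtain ⟨L, h1, h2, h3⟩ := ihc
        obtain ⟨L', h1', h2', h3'⟩ := step 2 (0,0,c) L h1 h2 h3
        rw [bump2'] at h1' h2' h3'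
        exact ⟨L', h1', h2', h3'⟩
    | succ b ihb =>
      obtain ⟨L, h1, h2, h3⟩ := ihb
      obtain ⟨L', h1', h2', h3'⟩ := step 1 (0,b,c) L h1 h2 h3
      rw [bump1'] at h1' h2' h3'
      exact ⟨L', h1', h2', h3'⟩
  | succ a iha =>
    obtain ⟨L, h1, h2, h3⟩ := iha
    obtain ⟨L', h1', h2', h3'⟩ := step 0 (a,b,c) L h1 h2 h3
    rw [bump0'] at h1' h2' h3'
    exact ⟨L', h1', h2', h3'⟩

end Decomp
section Estimates

lemma mdeg_le_of_mem_midx {m : ℕ} {α : ℕ × ℕ × ℕ} (h : α ∈ midx m) : mdeg α ≤ m :=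
  (Finset.mem_filter.mp h).2

lemma L2inner_sumT {ξ f : VF} (hξ : SmoothVF ξ) (hf : SmoothVF f) {h : VF}
    (hh : Continuous h) (L : List TIdx) :
    L2inner (sumT ξ f L) h = (L.map (fun t => L2inner (termF ξ f t) h)).sum := by
  induction L with
  | nil =>
    rw [sumT_nil]
    show (∫ x in cube, ∑ i, (0:V3) i * h x i) = 0
    simp
  | cons t L ih =>
    rw [sumT_cons, L2inner_add_left (smooth_termF hξ hf t).continuous
      (smooth_sumT hξ hf L).continuous hh, ih]
    simp

lemma term_L2_bound {ξ f : VF} {m : ℕ} (hξ : SmoothVF ξ) (hξp : Periodic3 ξ)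
    (hf : SmoothVF f) (t : TIdx) (hβ : mdeg t.1 ≤ m) (hγ : mdeg t.2.1 + 1 ≤ m) :
    L2inner (termF ξ f t) (termF ξ f t) ≤ (WinfNorm m ξ)^2 * sobNormSq m f := by
  obtain ⟨β, γ, j⟩ := t
  set W := WinfNorm m ξ with hW
  have hW0 : 0 ≤ W := winf_nonneg m
  set G : VF := Dm (bump j γ) f with hG
  have hGpd : pd j (Dm γ f) = G := pd_Dm hf j γ
  have hptle : ∀ x ∈ cube, (∑ i, termF ξ f (β, γ, j) x i * termF ξ f (β, γ, j) x i)
      ≤ W^2 * ∑ i, G x i * G x i := by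
    intro x _
    have habs : |Dm β ξ x j| ≤ W := by
      calc |Dm β ξ x j| ≤ ‖Dm β ξ x‖ := by
            rw [show |Dm β ξ x j| = ‖Dm β ξ x j‖ from rfl]
            exact norm_le_pi_norm (Dm β ξ x) j
      _ ≤ W := winf_bound hξ hξp (mem_midx_of_mdeg_le hβ) x
    have e1 : (∑ i, termF ξ f (β, γ, j) x i * termF ξ f (β, γ, j) x i)
        = (Dm β ξ x j)^2 * ∑ i, G x i * G x i := by
      simp only [termF, Pi.smul_apply, smul_eq_mul, hGpd]
      rw [Finset.mul_sum]
      exact Finset.sum_congr rfl fun i _ => by ring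
    rw [e1]
    have h2 : (Dm β ξ x j)^2 ≤ W^2 := by
      rw [← sq_abs]
      exact pow_le_pow_left₀ (abs_nonneg _) habs 2
    have h3 : 0 ≤ ∑ i, G x i * G x i := Finset.sum_nonneg fun i _ => mul_self_nonneg _
    exact mul_le_mul_of_nonneg_right h2 h3
  have hmono : L2inner (termF ξ f (β,γ,j)) (termF ξ f (β,γ,j))
      ≤ W^2 * L2inner G G := by
    unfold L2inner
    rw [← MeasureTheory.integral_const_mul]
    exact MeasureTheory.setIntegral_mono_on
      (integrableOn_pair (smooth_termF hξ hf (β,γ,j)).continuous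
        (smooth_termF hξ hf (β,γ,j)).continuous)
      ((integrableOn_pair (smooth_Dm hf (bump j γ)).continuous
        (smooth_Dm hf (bump j γ)).continuous).const_mul _)
      measurableSet_cube hptle
  have hsob : L2inner G G ≤ sobNormSq m f := by
    apply L2_term_le_sob
    apply mem_midx_of_mdeg_le
    rw [mdeg_bump]
    exact hγ
  calc L2inner (termF ξ f (β,γ,j)) (termF ξ f (β,γ,j)) ≤ W^2 * L2inner G G := hmono
  _ ≤ W^2 * sobNormSq m f := by
      apply mul_le_mul_of_nonneg_left hsob
      positivity

lemma term_pair_bound {ξ f : VF} {m : ℕ} (hξ : SmoothVF ξ) (hξp : Periodic3 ξ)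
    (hf : SmoothVF f) {α : ℕ × ℕ × ℕ} (hα : α ∈ midx m) (t : TIdx)
    (hβ : mdeg t.1 ≤ m) (hγ : mdeg t.2.1 + 1 ≤ m) :
    |L2inner (termF ξ f t) (Dm α f)| ≤ WinfNorm m ξ * sobNormSq m f := by
  set W := WinfNorm m ξ with hW
  set S := sobNormSq m f with hS
  have hW0 : 0 ≤ W := winf_nonneg m
  have hS0 : 0 ≤ S := sobNormSq_nonneg m f
  have hcs : (L2inner (termF ξ f t) (Dm α f))^2
      ≤ L2inner (termF ξ f t) (termF ξ f t) * L2inner (Dm α f) (Dm α f) :=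
    L2inner_sq_le (smooth_termF hξ hf t).continuous (smooth_Dm hf α).continuous
  have h1 : L2inner (termF ξ f t) (termF ξ f t) ≤ W^2 * S :=
    term_L2_bound hξ hξp hf t hβ hγ
  have h2 : L2inner (Dm α f) (Dm α f) ≤ S := L2_term_le_sob hα
  have hsq : (L2inner (termF ξ f t) (Dm α f))^2 ≤ (W * S)^2 := by
    have hterm_nn : 0 ≤ L2inner (termF ξ f t) (termF ξ f t) := L2inner_self_nonneg _
    have hDm_nn : 0 ≤ L2inner (Dm α f) (Dm α f) := L2inner_self_nonneg _
    nlinarith [hcs, h1, h2, hterm_nn, hDm_nn, hW0, hS0]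
  have := Real.sqrt_le_sqrt hsq
  rwa [Real.sqrt_sq_eq_abs, Real.sqrt_sq (by positivity)] at this

lemma list_sum_abs_le {L : List TIdx} {φ : TIdx → ℝ} {B : ℝ} (hB : 0 ≤ B)
    (h : ∀ t ∈ L, |φ t| ≤ B) : |(L.map φ).sum| ≤ L.length * B := by
  induction L with
  | nil => simp
  | cons t L ih =>
    simp only [List.map_cons, List.sum_cons, List.length_cons]
    have h1 : |φ t| ≤ B := h t List.mem_cons_self
    have h2 : |(L.map φ).sum| ≤ L.length * B := ih fun s hs => h s (List.mem_cons_of_mem t hs)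
    calc |φ t + (L.map φ).sum| ≤ |φ t| + |(L.map φ).sum| := abs_add_le _ _
    _ ≤ B + L.length * B := add_le_add h1 h2
    _ = (L.length + 1) * B := by ring
    _ = ((L.length + 1 : ℕ) : ℝ) * B := by push_cast; ring

end Estimates
/-- Proposition 2.5, second inequality. -/
theorem stmt7 (m : ℕ) (hm : 1 ≤ m) :
    ∃ C : ℝ, ∀ ξ f g : VF, GoodField ξ → GoodField f →
      IsLeray (transport ξ f) g →
      (sobInner m g f) ^ 2 ≤
        C * WinfNorm m ξ ^ 2 * (sobNormSq m f) ^ 2 := by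
  refine ⟨(((midx m).card : ℝ) * 5 ^ m)^2, ?_⟩
  intro ξ f g hGξ hGf hL
  obtain ⟨hξp, hξs, hξd, hξz⟩ := hGξ
  obtain ⟨hfp, hfs, hfd, hfz⟩ := hGf
  obtain ⟨hgp, hgs, hgd, hgz, p, cv, hpp, hps, hgrad⟩ := hL
  set W := WinfNorm m ξ with hWdef
  set S := sobNormSq m f with hSdef
  have hW0 : 0 ≤ W := winf_nonneg m
  have hS0 : 0 ≤ S := sobNormSq_nonneg m f
  have key : ∀ α ∈ midx m, |L2inner (Dm α g) (Dm α f)| ≤ (5:ℝ)^m * (W * S) := by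
    intro α hα
    have hmd : mdeg α ≤ m := mdeg_le_of_mem_midx hα
    set r : VF := fun x => grad p x + cv with hrdef
    have hrs : SmoothVF r := (smooth_grad hps).add contDiff_const
    have hueq : transport ξ f = fun x => g x + r x := by
      funext x
      exact sub_eq_iff_eq_add'.mp (hgrad x)
    have hDmu : Dm α (transport ξ f) = fun x => Dm α g x + Dm α r x := by
      rw [hueq]
      exact Dm_add hgs hrs α
    have hsplit : L2inner (Dm α (transport ξ f)) (Dm α f)
        = L2inner (Dm α g) (Dm α f) + L2inner (Dm α r) (Dm α f) := by
      rw [hDmu]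
      exact L2inner_add_left (smooth_Dm hgs α).continuous (smooth_Dm hrs α).continuous
        (smooth_Dm hfs α).continuous
    obtain ⟨c', hc'⟩ := Dm_const cv α
    have hDmr : Dm α r = fun x => grad (DmS α p) x + c' := by
      rw [hrdef, Dm_add (smooth_grad hps) contDiff_const α, Dm_grad hps α, hc']
    have hrzero : L2inner (Dm α r) (Dm α f) = 0 := by
      rw [hDmr, L2inner_add_left (smooth_grad (smoothS_DmS hps α)).continuous
        continuous_const (smooth_Dm hfs α).continuous]
      have h1 : L2inner (grad (DmS α p)) (Dm α f) = 0 :=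
        integral_grad_pair (smoothS_DmS hps α) (periodicS_DmS hps hpp α)
          (smooth_Dm hfs α) (periodic_Dm hfs hfp α) (divfree_Dm hfs hfd α)
      have h2 : L2inner (fun _ => c') (Dm α f) = 0 := by
        unfold L2inner
        rw [MeasureTheory.integral_finset_sum]
        · apply Finset.sum_eq_zero
          intro i _
          rw [MeasureTheory.integral_const_mul, comp_int_zero hfs hfp hfz α i, mul_zero]
        · intro i _
          exact (integrableOn_cube
            (smooth_comp_apply (smooth_Dm hfs α) i).continuous).const_mul _
      rw [h1, h2, add_zero]
    have hgu : L2inner (Dm α g) (Dm α f) = L2inner (Dm α (transport ξ f)) (Dm α f) := by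
      rw [hsplit, hrzero, add_zero]
    obtain ⟨L, hcond, hlen, hdec⟩ := decomp hξs hfs α
    have htr0 : L2inner (transport ξ (Dm α f)) (Dm α f) = 0 :=
      integral_transport_pair hξs hξp hξd (smooth_Dm hfs α) (periodic_Dm hfs hfp α)
    have hLsum : L2inner (Dm α (transport ξ f)) (Dm α f)
        = (L.map (fun t => L2inner (termF ξ f t) (Dm α f))).sum := by
      rw [hdec, L2inner_add_left (smooth_transport hξs (smooth_Dm hfs α)).continuous
        (smooth_sumT hξs hfs L).continuous (smooth_Dm hfs α).continuous, htr0, zero_add,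
        L2inner_sumT hξs hfs (smooth_Dm hfs α).continuous L]
    rw [hgu, hLsum]
    have hB : ∀ t ∈ L, |L2inner (termF ξ f t) (Dm α f)| ≤ W * S := by
      intro t ht
      obtain ⟨h1, h2⟩ := hcond t ht
      exact term_pair_bound hξs hξp hfs hα t (by omega) (by omega)
    calc |(L.map (fun t => L2inner (termF ξ f t) (Dm α f))).sum|
        ≤ L.length * (W * S) := list_sum_abs_le (by positivity) hB
    _ ≤ (5:ℝ)^m * (W*S) := by
        apply mul_le_mul_of_nonneg_right _ (by positivity)
        calc (L.length : ℝ) ≤ ((5^mdeg α : ℕ) : ℝ) := Nat.cast_le.mpr hlen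
        _ ≤ (5:ℝ)^m := by
            push_cast
            exact pow_le_pow_right₀ (by norm_num) hmd
  have htotal : |sobInner m g f| ≤ ((midx m).card : ℝ) * ((5:ℝ)^m * (W * S)) := by
    unfold sobInner
    calc |∑ α ∈ midx m, L2inner (Dm α g) (Dm α f)|
        ≤ ∑ α ∈ midx m, |L2inner (Dm α g) (Dm α f)| := Finset.abs_sum_le_sum_abs _ _
    _ ≤ ∑ _α ∈ midx m, (5:ℝ)^m * (W*S) := Finset.sum_le_sum key
    _ = ((midx m).card : ℝ) * ((5:ℝ)^m * (W*S)) := by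
        rw [Finset.sum_const, nsmul_eq_mul]
  have hsq : (sobInner m g f)^2 ≤ (((midx m).card : ℝ) * ((5:ℝ)^m * (W * S)))^2 := by
    rw [← sq_abs]
    exact pow_le_pow_left₀ (abs_nonneg _) htotal 2
  calc (sobInner m g f)^2 ≤ _ := hsq
  _ = (((midx m).card : ℝ) * 5^m)^2 * W^2 * S^2 := by ring
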